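/- The set of Wang tile sets that do NOT admit a tiling of the plane is computably (recursively) enumerable: there is a partial computable function on the codes of Wang tile sets, encoded as finite lists of quadruples of natural numbers, whose domain is exactly the set of codes of Wang tile sets admitting no tiling of the plane. -/

import Mathlib

set_option maxHeartbeats 1000000

open Primrec


/-- A Wang tile: the colours of its (west, south, east, north) edges. -/
abbrev WangTile : Type := ℕ × ℕ × ℕ × ℕ

def WangTile.west (t : WangTile) : ℕ := t.1
def WangTile.south (t : WangTile) : ℕ := t.2.1
def WangTile.east (t : WangTile) : ℕ := t.2.2.1
def WangTile.north (t : WangTile) : ℕ := t.2.2.2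

/-- The Wang matching conditions for a configuration of tiles on `ℤ × ℤ`. -/
def WangMatch (f : ℤ × ℤ → WangTile) : Prop :=
  ∀ x y : ℤ,
    (f (x, y)).east = (f (x + 1, y)).west ∧ (f (x, y)).north = (f (x, y + 1)).south

/-- A tiling of the plane by the Wang tile set `S`. -/
def IsWangTiling (S : Finset WangTile) (f : ℤ × ℤ → WangTile) : Prop :=
  (∀ p, f p ∈ S) ∧ WangMatch f

/-- A configuration is periodic if it is invariant under some nonzero translation. -/
def WangPeriodic (f : ℤ × ℤ → WangTile) : Prop :=
  ∃ v : ℤ × ℤ, v ≠ 0 ∧ ∀ p, f (p + v) = f p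

/-- A Wang tile set is aperiodic if it admits a tiling of the plane and every tiling
of the plane by it is nonperiodic. -/
def WangAperiodic (S : Finset WangTile) : Prop :=
  (∃ f, IsWangTiling S f) ∧ ∀ f, IsWangTiling S f → ¬ WangPeriodic f

/-- A tiling of the plane by the Wang tile set encoded by the list `l`. -/
def IsWangTilingL (l : List WangTile) (f : ℤ × ℤ → WangTile) : Prop :=
  (∀ p, f p ∈ l) ∧ WangMatch f

/-- The set of (list-encoded) Wang tile sets that do **not** admit a tiling of the plane is
computably enumerable: it is the domain of a partial computable function. -/
def WT.tdef : WangTile := (0,0,0,0)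
def WT.allGrids (l : List WangTile) : ℕ → List (List WangTile)
  | 0 => [[]]
  | n+1 => (WT.allGrids l n).flatMap fun t => l.map fun a => a :: t
def WT.cellOk (g : List WangTile) (n i j : ℕ) : Bool :=
  (!(decide (j+1 < n)) || decide ((g.getD (i*n+j) WT.tdef).east = (g.getD (i*n+(j+1)) WT.tdef).west)) &&
  (!(decide (i+1 < n)) || decide ((g.getD (i*n+j) WT.tdef).north = (g.getD ((i+1)*n+j) WT.tdef).south))
def WT.gridOk (g : List WangTile) (n : ℕ) : Bool :=
  decide ((((List.range n).flatMap fun i => (List.range n).flatMap fun j =>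
    cond (WT.cellOk g n i j) [] [0]).length : ℕ) = 0)

theorem WT.mem_allGrids {l : List WangTile} {n : ℕ} {g : List WangTile} :
    g ∈ WT.allGrids l n ↔ g.length = n ∧ ∀ a ∈ g, a ∈ l := by
  induction n generalizing g with
  | zero =>
    simp only [WT.allGrids, List.mem_singleton, List.length_eq_zero_iff]
    constructor
    · rintro rfl; simp
    · rintro ⟨rfl, -⟩; rfl
  | succ n ih =>
    simp only [WT.allGrids, List.mem_flatMap, List.mem_map]
    constructor
    · rintro ⟨t, ht, a, ha, rfl⟩
      obtain ⟨h1, h2⟩ := ih.1 ht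
      refine ⟨by simp [h1], ?_⟩
      intro b hb
      rcases List.mem_cons.1 hb with rfl | hb
      · exact ha
      · exact h2 b hb
    · rintro ⟨h1, h2⟩
      cases g with
      | nil => simp at h1
      | cons a t =>
        exact ⟨t, ih.2 ⟨by simpa using h1, fun b hb => h2 b (List.mem_cons_of_mem _ hb)⟩,
          a, h2 a List.mem_cons_self, rfl⟩

theorem WT.cellOk_iff {g : List WangTile} {n i j : ℕ} :
    WT.cellOk g n i j = true ↔
    ((j+1 < n → (g.getD (i*n+j) WT.tdef).east = (g.getD (i*n+(j+1)) WT.tdef).west) ∧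
     (i+1 < n → (g.getD (i*n+j) WT.tdef).north = (g.getD ((i+1)*n+j) WT.tdef).south)) := by
  simp [WT.cellOk, imp_iff_not_or]

theorem WT.gridOk_iff {g : List WangTile} {n : ℕ} :
    WT.gridOk g n = true ↔ ∀ i < n, ∀ j < n, WT.cellOk g n i j = true := by
  simp only [WT.gridOk, decide_eq_true_eq, List.length_eq_zero_iff, List.flatMap_eq_nil_iff,
    List.mem_range]
  constructor
  · intro h i hi j hj
    have := h i hi j hj
    cases hc : WT.cellOk g n i j
    · rw [hc] at this; simp at this
    · rfl
  · intro h i hi j hj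
    rw [h i hi j hj]
    rfl

theorem WT.index_lt {n i j : ℕ} (hi : i < n) (hj : j < n) : i*n+j < n*n :=
  lt_of_lt_of_le (Nat.add_lt_add_left hj _)
    (by calc i*n+n = (i+1)*n := by ring
        _ ≤ n*n := Nat.mul_le_mul_right _ hi)

/-- Part A: a tiling yields a good grid of every size. -/
theorem WT.good_of_tiling {l : List WangTile} {f : ℤ × ℤ → WangTile}
    (hf : IsWangTilingL l f) (n : ℕ) :
    ∃ g ∈ WT.allGrids l (n*n), WT.gridOk g n = true := by
  classical
  refine ⟨(List.range (n*n)).map fun k => f (↑(k % n), ↑(k / n)), ?_, ?_⟩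
  · rw [WT.mem_allGrids]
    constructor
    · simp
    · intro a ha
      simp only [List.mem_map] at ha
      obtain ⟨k, -, rfl⟩ := ha
      exact hf.1 _
  · have key : ∀ i < n, ∀ j < n,
        ((List.range (n*n)).map fun k => f (↑(k % n), ↑(k / n))).getD (i*n+j) WT.tdef
          = f (↑j, ↑i) := by
      intro i hi j hj
      have hk : i*n+j < n*n := WT.index_lt hi hj
      rw [List.getD_eq_getElem _ _ (by simpa using hk)]
      simp only [List.getElem_map, List.getElem_range]
      have hn0 : 0 < n := lt_of_le_of_lt (Nat.zero_le _) hj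
      have e1 : (i*n+j) % n = j := by
        rw [show i*n+j = j + i*n by ring, Nat.add_mul_mod_self_right, Nat.mod_eq_of_lt hj]
      have e2 : (i*n+j) / n = i := by
        rw [show i*n+j = j + n*i by ring, Nat.add_mul_div_left _ _ hn0,
          Nat.div_eq_of_lt hj, Nat.zero_add]
      rw [e1, e2]
    rw [WT.gridOk_iff]
    intro i hi j hj
    rw [WT.cellOk_iff]
    constructor
    · intro hj1
      rw [key i hi j hj, key i hi (j+1) hj1]
      have := (hf.2 j i).1
      push_cast
      exact this
    · intro hi1
      rw [key i hi j hj, key (i+1) hi1 j hj]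
      have := (hf.2 j i).2
      push_cast
      exact this

/-- Part B step: a good grid of size 2n+2 yields a configuration matching on [-n,n]². -/
theorem WT.patch_of_good {l : List WangTile} (n : ℕ)
    (h : ∃ g ∈ WT.allGrids l ((2*n+2)*(2*n+2)), WT.gridOk g (2*n+2) = true) :
    ∃ h : ℤ × ℤ → WangTile, (∀ p, h p ∈ l) ∧
      ∀ x y : ℤ, |x| ≤ (n:ℤ) → |y| ≤ (n:ℤ) →
        ((h (x,y)).east = (h (x+1,y)).west ∧ (h (x,y)).north = (h (x,y+1)).south) := by
  classical
  obtain ⟨g, hg, hok⟩ := h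
  set m := 2*n+2 with hm
  obtain ⟨hlen, hmem⟩ := WT.mem_allGrids.1 hg
  have hok' := WT.gridOk_iff.1 hok
  set T : ℕ → ℕ → WangTile := fun i j => g.getD (i*m+j) WT.tdef with hT
  have hTmem : ∀ i j, i < m → j < m → T i j ∈ l := by
    intro i j hi hj
    have hk : i*m+j < m*m := WT.index_lt hi hj
    rw [hT]
    simp only
    rw [List.getD_eq_getElem _ _ (by rw [hlen]; exact hk)]
    exact hmem _ (List.getElem_mem _)
  set cl : ℤ → ℕ := fun z => if -(n:ℤ) ≤ z ∧ z ≤ (n:ℤ)+1 then (z+n).toNat else 0 with hcl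
  have hclle : ∀ z, cl z < m := by
    intro z
    rw [hcl]
    simp only
    split
    · next hz => omega
    · omega
  refine ⟨fun p => T (cl p.2) (cl p.1), fun p => hTmem _ _ (hclle _) (hclle _), ?_⟩
  intro x y hx hy
  rw [abs_le] at hx hy
  have hclx : cl x = (x+n).toNat := by rw [hcl]; simp only; rw [if_pos (by omega)]
  have hcly : cl y = (y+n).toNat := by rw [hcl]; simp only; rw [if_pos (by omega)]
  have hclx1 : cl (x+1) = cl x + 1 := by
    rw [hcl]; simp only; rw [if_pos (by omega), if_pos (by omega)]; omega
  have hcly1 : cl (y+1) = cl y + 1 := by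
    rw [hcl]; simp only; rw [if_pos (by omega), if_pos (by omega)]; omega
  have hxlt : cl x + 1 < m := by omega
  have hylt : cl y + 1 < m := by omega
  have hcell := WT.cellOk_iff.1 (hok' (cl y) (by omega) (cl x) (by omega))
  constructor
  · show (T (cl y) (cl x)).east = (T (cl y) (cl (x+1))).west
    rw [hclx1]; exact hcell.1 hxlt
  · show (T (cl y) (cl x)).north = (T (cl (y+1)) (cl x)).south
    rw [hcly1]; exact hcell.2 hylt

theorem WT.tiling_of_all_good {l : List WangTile}
    (H : ∀ n : ℕ, ∃ g ∈ WT.allGrids l (n*n), WT.gridOk g n = true) :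
    ∃ f, IsWangTilingL l f := by
  classical
  have patch : ∀ n : ℕ, ∃ h : ℤ × ℤ → WangTile, (∀ p, h p ∈ l) ∧
      ∀ x y : ℤ, |x| ≤ (n:ℤ) → |y| ≤ (n:ℤ) →
        ((h (x,y)).east = (h (x+1,y)).west ∧ (h (x,y)).north = (h (x,y+1)).south) :=
    fun n => WT.patch_of_good n (H (2*n+2))
  letI : TopologicalSpace {t : WangTile // t ∈ l} := ⊥
  haveI : DiscreteTopology {t : WangTile // t ∈ l} := ⟨rfl⟩
  haveI : Finite {t : WangTile // t ∈ l} := (l.finite_toSet).to_subtype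
  haveI : CompactSpace {t : WangTile // t ∈ l} := Finite.compactSpace
  set V : ℕ → Set ((ℤ × ℤ) → {t : WangTile // t ∈ l}) := fun n =>
    {f | ∀ x y : ℤ, |x| ≤ (n:ℤ) → |y| ≤ (n:ℤ) →
      ((f (x,y)).1.east = (f (x+1,y)).1.west ∧ (f (x,y)).1.north = (f (x,y+1)).1.south)}
    with hV
  have hmono : ∀ i, V (i+1) ⊆ V i := by
    intro i f hf x y hx hy
    exact hf x y (le_trans hx (by push_cast; omega)) (le_trans hy (by push_cast; omega))
  have hne : ∀ i, (V i).Nonempty := by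
    intro i
    obtain ⟨h, hmem, hmatch⟩ := patch i
    exact ⟨fun p => ⟨h p, hmem p⟩, fun x y hx hy => hmatch x y hx hy⟩
  have hcl : ∀ (p q : ℤ × ℤ) (c : Set ({t : WangTile // t ∈ l} × {t : WangTile // t ∈ l})),
      IsClosed {f : (ℤ × ℤ) → {t : WangTile // t ∈ l} | (f p, f q) ∈ c} :=
    fun p q c => (isClosed_discrete c).preimage ((continuous_apply p).prodMk (continuous_apply q))
  have hVc : ∀ i, IsClosed (V i) := by
    intro i
    have : V i = ⋂ (x : ℤ) (y : ℤ) (_ : |x| ≤ (i:ℤ)) (_ : |y| ≤ (i:ℤ)),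
        ({f : (ℤ × ℤ) → {t : WangTile // t ∈ l} |
            (f (x,y), f (x+1,y)) ∈ {z : _ × _ | z.1.1.east = z.2.1.west}} ∩
         {f | (f (x,y), f (x,y+1)) ∈ {z : _ × _ | z.1.1.north = z.2.1.south}}) := by
      ext f
      simp only [hV, Set.mem_iInter, Set.mem_inter_iff, Set.mem_setOf_eq]
      try tauto
    rw [this]
    exact isClosed_iInter fun x => isClosed_iInter fun y => isClosed_iInter fun _ =>
      isClosed_iInter fun _ => (hcl _ _ _).inter (hcl _ _ _)
  obtain ⟨f, hf⟩ := IsCompact.nonempty_iInter_of_sequence_nonempty_isCompact_isClosed V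
    hmono hne ((hVc 0).isCompact) hVc
  simp only [Set.mem_iInter] at hf
  refine ⟨fun p => (f p).1, fun p => (f p).2, ?_⟩
  intro x y
  have hx : |x| ≤ ((max x.natAbs y.natAbs : ℕ) : ℤ) := by
    rw [Int.abs_eq_natAbs]; exact_mod_cast le_max_left _ _
  have hy : |y| ≤ ((max x.natAbs y.natAbs : ℕ) : ℤ) := by
    rw [Int.abs_eq_natAbs]; exact_mod_cast le_max_right _ _
  exact hf (max x.natAbs y.natAbs) x y hx hy

def WT.bad (l : List WangTile) (n : ℕ) : Bool :=
  decide ((((WT.allGrids l (n*n)).flatMap fun g =>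
    cond (WT.gridOk g n) [0] []).length : ℕ) = 0)

theorem WT.bad_iff {l : List WangTile} {n : ℕ} :
    WT.bad l n = true ↔ ¬ ∃ g ∈ WT.allGrids l (n*n), WT.gridOk g n = true := by
  simp only [WT.bad, decide_eq_true_eq, List.length_eq_zero_iff, List.flatMap_eq_nil_iff]
  constructor
  · rintro h ⟨g, hg, hok⟩
    have := h g hg
    rw [hok] at this; simp at this
  · intro h g hg
    cases hc : WT.gridOk g n
    · rfl
    · exact absurd ⟨g, hg, hc⟩ h

theorem WT.primrec_allGrids : Primrec₂ WT.allGrids := by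
  have h : Primrec₂ fun (a : List WangTile × ℕ) (p : ℕ × List (List WangTile)) =>
      p.2.flatMap fun t => a.1.map fun x => x :: t := by
    exact Primrec.list_flatMap (snd.comp snd)
      (Primrec.list_map (fst.comp (fst.comp fst))
        (Primrec.list_cons.comp snd (snd.comp fst)).to₂).to₂
  have := Primrec.nat_rec' (f := fun p : List WangTile × ℕ => p.2)
    (g := fun _ => ([[]] : List (List WangTile))) Primrec.snd (Primrec.const [[]]) h
  refine this.to₂.of_eq fun l n => ?_
  induction n with
  | zero => rfl
  | succ n ih => simp only [WT.allGrids, ← ih]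

theorem WT.primrec_cellOk :
    Primrec fun p : ((List WangTile × ℕ) × ℕ) × ℕ => WT.cellOk p.1.1.1 p.1.1.2 p.1.2 p.2 := by
  have hl : Primrec fun p : ((List WangTile × ℕ) × ℕ) × ℕ => p.1.1.1 := fst.comp (fst.comp fst)
  have hn : Primrec fun p : ((List WangTile × ℕ) × ℕ) × ℕ => p.1.1.2 := snd.comp (fst.comp fst)
  have hi : Primrec fun p : ((List WangTile × ℕ) × ℕ) × ℕ => p.1.2 := snd.comp fst
  have hj : Primrec fun p : ((List WangTile × ℕ) × ℕ) × ℕ => p.2 := snd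
  have hget : ∀ {k : ((List WangTile × ℕ) × ℕ) × ℕ → ℕ}, Primrec k →
      Primrec fun p : ((List WangTile × ℕ) × ℕ) × ℕ => (p.1.1.1).getD (k p) WT.tdef :=
    fun hk => (Primrec.list_getD WT.tdef).comp hl hk
  have heast : Primrec WangTile.east := fst.comp (snd.comp snd)
  have hwest : Primrec WangTile.west := fst
  have hnorth : Primrec WangTile.north := snd.comp (snd.comp snd)
  have hsouth : Primrec WangTile.south := fst.comp snd
  have hij : Primrec fun p : ((List WangTile × ℕ) × ℕ) × ℕ => p.1.2 * p.1.1.2 + p.2 :=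
    nat_add.comp (nat_mul.comp hi hn) hj
  have hb1 : Primrec fun p : ((List WangTile × ℕ) × ℕ) × ℕ =>
      decide ((p.1.1.1.getD (p.1.2*p.1.1.2+p.2) WT.tdef).east
        = (p.1.1.1.getD (p.1.2*p.1.1.2+(p.2+1)) WT.tdef).west) :=
    Primrec.eq.comp (heast.comp (hget hij))
      (hwest.comp (hget (nat_add.comp (nat_mul.comp hi hn) (succ.comp hj)))) |>.decide
  have hb2 : Primrec fun p : ((List WangTile × ℕ) × ℕ) × ℕ =>
      decide ((p.1.1.1.getD (p.1.2*p.1.1.2+p.2) WT.tdef).north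
        = (p.1.1.1.getD ((p.1.2+1)*p.1.1.2+p.2) WT.tdef).south) :=
    Primrec.eq.comp (hnorth.comp (hget hij))
      (hsouth.comp (hget (nat_add.comp (nat_mul.comp (succ.comp hi) hn) hj))) |>.decide
  have hc1 : Primrec fun p : ((List WangTile × ℕ) × ℕ) × ℕ => !(decide (p.2+1 < p.1.1.2)) :=
    Primrec.not.comp (nat_lt.comp (succ.comp hj) hn).decide
  have hc2 : Primrec fun p : ((List WangTile × ℕ) × ℕ) × ℕ => !(decide (p.1.2+1 < p.1.1.2)) :=
    Primrec.not.comp (nat_lt.comp (succ.comp hi) hn).decide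
  exact Primrec.and.comp (Primrec.or.comp hc1 hb1) (Primrec.or.comp hc2 hb2)

theorem WT.primrec_gridOk : Primrec fun p : List WangTile × ℕ => WT.gridOk p.1 p.2 := by
  have haux : Primrec fun p : List WangTile × ℕ =>
      (List.range p.2).flatMap fun i => (List.range p.2).flatMap fun j =>
        cond (WT.cellOk p.1 p.2 i j) [] [0] := by
    refine Primrec.list_flatMap (g := fun (p : List WangTile × ℕ) i => (List.range p.2).flatMap fun j =>
        cond (WT.cellOk p.1 p.2 i j) [] [0]) (list_range.comp snd) ?_
    refine (Primrec.list_flatMap (g := fun (q : (List WangTile × ℕ) × ℕ) j =>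
        cond (WT.cellOk q.1.1 q.1.2 q.2 j) [] [0]) (list_range.comp (snd.comp fst)) ?_).to₂
    exact (Primrec.cond WT.primrec_cellOk (const ([] : List ℕ)) (const [0])).to₂
  exact (Primrec.eq.comp (list_length.comp haux) (const 0)).decide

theorem WT.primrec_bad : Primrec₂ WT.bad := by
  have haux : Primrec fun p : List WangTile × ℕ =>
      (WT.allGrids p.1 (p.2*p.2)).flatMap fun g => cond (WT.gridOk g p.2) [0] [] := by
    refine Primrec.list_flatMap (WT.primrec_allGrids.comp fst (nat_mul.comp snd snd)) ?_
    exact (Primrec.cond (WT.primrec_gridOk.comp (Primrec.pair snd (snd.comp fst)))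
      (const [0]) (const ([] : List ℕ))).to₂
  exact ((Primrec.eq.comp (list_length.comp haux) (const 0)).decide : _)

theorem non_tiling_wang_sets_re :
    ∃ F : List WangTile →. Unit, Partrec F ∧
      ∀ l : List WangTile, (F l).Dom ↔ ¬ ∃ f, IsWangTilingL l f := by
  refine ⟨fun l => (Nat.rfind fun n => Part.some (WT.bad l n)).map fun _ => (), ?_, ?_⟩
  · exact (Partrec.rfind (WT.primrec_bad.to_comp.partrec₂)).map
      ((Computable.const ()).comp Computable.fst).to₂
  · intro l
    have hdom : ((Nat.rfind fun n => Part.some (WT.bad l n)).map fun _ => ()).Dom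
        ↔ ∃ n, WT.bad l n = true := by
      have e : ((Nat.rfind fun n => Part.some (WT.bad l n)).map fun _ => ()).Dom
          = (Nat.rfind fun n => Part.some (WT.bad l n)).Dom := rfl
      rw [e]; refine Nat.rfind_dom.trans ?_
      constructor
      · rintro ⟨n, hn, -⟩
        exact ⟨n, (Part.mem_some_iff.1 hn).symm⟩
      · rintro ⟨n, hn⟩
        exact ⟨n, Part.mem_some_iff.2 hn.symm, fun _ => trivial⟩
    rw [hdom]
    constructor
    · rintro ⟨n, hn⟩ ⟨f, hf⟩
      exact WT.bad_iff.1 hn (WT.good_of_tiling hf n)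
    · intro h
      by_contra hno
      push_neg at hno
      refine h (WT.tiling_of_all_good fun n => ?_)
      by_contra hg
      exact (hno n) (WT.bad_iff.2 hg)
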